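/- For the group G = GL(n+1,ℝ) with Φ_k(x) = det((x_{ij})_{1≤i,j≤k}) the k-th leading principal minor, and w̃₀ the anti-diagonal permutation matrix, the function g ↦ Φ_k(w̃₀ g) satisfies: Φ_k(w̃₀ g d n) = d₁⋯d_k · Φ_k(w̃₀ g) for every diagonal matrix d = diag(d₁,…,d_{n+1}) and every upper-triangular unipotent matrix n, and Φ_k(w̃₀ d' n' g) = d'_{n−k+2}⋯d'_{n+1} · Φ_k(w̃₀ g) for every diagonal d' = diag(d'₁,…,d'_{n+1}) and upper-triangular unipotent n' with last row and column equal to those of the identity (i.e. d' ∈ M_H A_H, n' ∈ N_H for H = GL(n,ℝ) embedded in the upper-left corner). -/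

import Mathlib

open Matrix

/-- The anti-diagonal permutation matrix `w̃₀` of size `n+1`. -/
def antiDiag (n : ℕ) : Matrix (Fin (n + 1)) (Fin (n + 1)) ℝ :=
  fun i j => if (i : ℕ) + (j : ℕ) = n then 1 else 0

/-- `Φ_k(x)`: the `k`-th leading principal minor of `x`. -/
noncomputable def Phi (n : ℕ) (k : ℕ) (hk : k ≤ n + 1)
    (x : Matrix (Fin (n + 1)) (Fin (n + 1)) ℝ) : ℝ :=
  (x.submatrix (Fin.castLE hk) (Fin.castLE hk)).det

/-- Upper-triangular unipotent matrices. -/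
def IsUnipotentUpper {m : ℕ} (u : Matrix (Fin m) (Fin m) ℝ) : Prop :=
  (∀ i, u i i = 1) ∧ ∀ i j : Fin m, j < i → u i j = 0

namespace Stmt11Aux

open Finset

variable {n k : ℕ}

def castEmb (hk : k ≤ n + 1) : Fin k ↪ Fin (n+1) :=
  ⟨Fin.castLE hk, Fin.castLE_injective hk⟩

lemma mem_castEmb (hk : k ≤ n + 1) (l : Fin (n+1)) :
    l ∈ (univ : Finset (Fin k)).map (castEmb hk) ↔ (l : ℕ) < k := by
  simp only [Finset.mem_map, Finset.mem_univ, true_and, castEmb, Function.Embedding.coeFn_mk]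
  constructor
  · rintro ⟨a, rfl⟩; exact a.isLt
  · intro h; exact ⟨⟨l, h⟩, rfl⟩

lemma sum_trunc (hk : k ≤ n + 1) (f : Fin (n+1) → ℝ)
    (h : ∀ l : Fin (n+1), k ≤ (l : ℕ) → f l = 0) :
    ∑ l : Fin (n+1), f l = ∑ l : Fin k, f (Fin.castLE hk l) := by
  have h1 : ∑ l ∈ univ.map (castEmb hk), f l = ∑ l : Fin k, f (Fin.castLE hk l) :=
    Finset.sum_map _ _ _
  rw [← h1]
  refine (Finset.sum_subset (Finset.subset_univ _) ?_).symm
  intro l _ hl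
  exact h l (le_of_not_gt fun hc => hl ((mem_castEmb hk l).2 hc))

lemma upper_mul_submatrix (hk : k ≤ n + 1)
    (M T : Matrix (Fin (n+1)) (Fin (n+1)) ℝ)
    (hT : ∀ i j : Fin (n+1), (j : ℕ) < (i : ℕ) → T i j = 0) :
    (M * T).submatrix (Fin.castLE hk) (Fin.castLE hk) =
      M.submatrix (Fin.castLE hk) (Fin.castLE hk) *
        T.submatrix (Fin.castLE hk) (Fin.castLE hk) := by
  ext i j
  simp only [submatrix_apply, mul_apply]
  exact sum_trunc hk _ fun l hl => by
    rw [hT l (Fin.castLE hk j) (lt_of_lt_of_le j.isLt hl), mul_zero]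

lemma lower_mul_submatrix (hk : k ≤ n + 1)
    (L M : Matrix (Fin (n+1)) (Fin (n+1)) ℝ)
    (hL : ∀ i j : Fin (n+1), (i : ℕ) < (j : ℕ) → L i j = 0) :
    (L * M).submatrix (Fin.castLE hk) (Fin.castLE hk) =
      L.submatrix (Fin.castLE hk) (Fin.castLE hk) *
        M.submatrix (Fin.castLE hk) (Fin.castLE hk) := by
  ext i j
  simp only [submatrix_apply, mul_apply]
  exact sum_trunc hk _ fun l hl => by
    rw [hL (Fin.castLE hk i) l (lt_of_lt_of_le i.isLt hl), zero_mul]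

lemma det_sub_upper (hk : k ≤ n + 1) (T : Matrix (Fin (n+1)) (Fin (n+1)) ℝ)
    (hT : ∀ i j : Fin (n+1), (j : ℕ) < (i : ℕ) → T i j = 0) :
    (T.submatrix (Fin.castLE hk) (Fin.castLE hk)).det =
      ∏ i : Fin k, T (Fin.castLE hk i) (Fin.castLE hk i) := by
  have h : (T.submatrix (Fin.castLE hk) (Fin.castLE hk)).BlockTriangular id :=
    fun i j hij => hT _ _ hij
  rw [Matrix.det_of_upperTriangular h]
  rfl

lemma det_sub_lower (hk : k ≤ n + 1) (L : Matrix (Fin (n+1)) (Fin (n+1)) ℝ)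
    (hL : ∀ i j : Fin (n+1), (i : ℕ) < (j : ℕ) → L i j = 0) :
    (L.submatrix (Fin.castLE hk) (Fin.castLE hk)).det =
      ∏ i : Fin k, L (Fin.castLE hk i) (Fin.castLE hk i) := by
  have h : (L.submatrix (Fin.castLE hk) (Fin.castLE hk)).BlockTriangular OrderDual.toDual :=
    fun i j hij => hL _ _ hij
  rw [Matrix.det_of_lowerTriangular _ h]
  rfl

lemma val_rev (i : Fin (n+1)) : (i.rev : ℕ) = n - i := by
  simp [Fin.val_rev]

lemma antiDiag_mul (M : Matrix (Fin (n+1)) (Fin (n+1)) ℝ) (i j : Fin (n+1)) :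
    (antiDiag n * M) i j = M i.rev j := by
  rw [mul_apply]
  rw [Finset.sum_eq_single i.rev]
  · simp [antiDiag, val_rev, Nat.add_sub_cancel' i.is_le]
  · intro b _ hb
    have : (i : ℕ) + (b : ℕ) ≠ n := by
      intro h
      apply hb
      have := val_rev (n := n) i
      exact Fin.ext (by omega)
    simp [antiDiag, this]
  · simp

lemma mul_antiDiag (M : Matrix (Fin (n+1)) (Fin (n+1)) ℝ) (i j : Fin (n+1)) :
    (M * antiDiag n) i j = M i j.rev := by
  rw [mul_apply]
  rw [Finset.sum_eq_single j.rev]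
  · simp [antiDiag, val_rev, Nat.sub_add_cancel j.is_le]
  · intro b _ hb
    have : (b : ℕ) + (j : ℕ) ≠ n := by
      intro h
      apply hb
      have := val_rev (n := n) j
      exact Fin.ext (by omega)
    simp [antiDiag, this]
  · simp

lemma antiDiag_sq : antiDiag n * antiDiag n = (1 : Matrix (Fin (n+1)) (Fin (n+1)) ℝ) := by
  ext i j
  rw [antiDiag_mul]
  have hi := i.is_le
  have hj := j.is_le
  have hr := val_rev (n := n) i
  by_cases h : i = j
  · subst h; simp [antiDiag, one_apply, hr, Nat.sub_add_cancel hi]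
  · have : (i.rev : ℕ) + (j : ℕ) ≠ n := by
      intro hc; apply h; exact Fin.ext (by omega)
    simp only [antiDiag, one_apply, if_neg this, if_neg h]

lemma conj_apply (M : Matrix (Fin (n+1)) (Fin (n+1)) ℝ) (i j : Fin (n+1)) :
    (antiDiag n * M * antiDiag n) i j = M i.rev j.rev := by
  rw [mul_antiDiag, antiDiag_mul]

lemma prod_filter_lt (hk : k ≤ n + 1) (f : Fin (n+1) → ℝ) :
    (∏ i ∈ Finset.univ.filter fun i : Fin (n + 1) => (i : ℕ) < k, f i) =
      ∏ i : Fin k, f (Fin.castLE hk i) := by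
  have h1 : Finset.univ.filter (fun i : Fin (n + 1) => (i : ℕ) < k) =
      (univ : Finset (Fin k)).map (castEmb hk) := by
    ext l
    rw [Finset.mem_filter, mem_castEmb]
    simp
  rw [h1, Finset.prod_map]
  rfl

def revEmb (hk : k ≤ n + 1) : Fin k ↪ Fin (n+1) :=
  ⟨fun i => (Fin.castLE hk i).rev, fun a b h => by
    have := Fin.rev_injective h
    exact Fin.castLE_injective hk this⟩

lemma prod_filter_ge (hk1 : 1 ≤ k) (hk : k ≤ n + 1) (f : Fin (n+1) → ℝ) :
    (∏ i ∈ Finset.univ.filter fun i : Fin (n + 1) => n + 1 - k ≤ (i : ℕ), f i) =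
      ∏ i : Fin k, f (Fin.castLE hk i).rev := by
  have h1 : Finset.univ.filter (fun i : Fin (n + 1) => n + 1 - k ≤ (i : ℕ)) =
      (univ : Finset (Fin k)).map (revEmb hk) := by
    ext l
    simp only [Finset.mem_filter, Finset.mem_univ, true_and, Finset.mem_map, revEmb,
      Function.Embedding.coeFn_mk]
    have hl := l.is_le
    constructor
    · intro h
      have hrl : ((l.rev : Fin (n+1)) : ℕ) < k := by
        rw [val_rev]; omega
      refine ⟨⟨l.rev, hrl⟩, ?_⟩
      have : Fin.castLE hk ⟨(l.rev : ℕ), hrl⟩ = l.rev := rfl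
      show (Fin.castLE hk ⟨(l.rev : ℕ), hrl⟩).rev = l
      rw [this, Fin.rev_rev]
    · rintro ⟨a, rfl⟩
      show n + 1 - k ≤ ((Fin.castLE hk a).rev : ℕ)
      rw [val_rev]
      have : ((Fin.castLE hk a : Fin (n+1)) : ℕ) < k := a.isLt
      omega
  rw [h1, Finset.prod_map]
  rfl

end Stmt11Aux

open Stmt11Aux

theorem stmt11 (n k : ℕ) (hk1 : 1 ≤ k) (hk : k ≤ n + 1) :
    (∀ (g : Matrix (Fin (n + 1)) (Fin (n + 1)) ℝ) (d : Fin (n + 1) → ℝ)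
        (u : Matrix (Fin (n + 1)) (Fin (n + 1)) ℝ), IsUnipotentUpper u →
        Phi n k hk (antiDiag n * (g * Matrix.diagonal d * u)) =
          (∏ i ∈ Finset.univ.filter fun i : Fin (n + 1) => (i : ℕ) < k, d i) *
            Phi n k hk (antiDiag n * g)) ∧
    (∀ (g : Matrix (Fin (n + 1)) (Fin (n + 1)) ℝ) (d' : Fin (n + 1) → ℝ)
        (u' : Matrix (Fin (n + 1)) (Fin (n + 1)) ℝ), IsUnipotentUpper u' →
        d' (Fin.last n) = 1 →
        (∀ i : Fin (n + 1), i ≠ Fin.last n → u' i (Fin.last n) = 0) →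
        Phi n k hk (antiDiag n * (Matrix.diagonal d' * u' * g)) =
          (∏ i ∈ Finset.univ.filter fun i : Fin (n + 1) => n + 1 - k ≤ (i : ℕ), d' i) *
            Phi n k hk (antiDiag n * g)) := by
  constructor
  · intro g d u hu
    set T := Matrix.diagonal d * u with hT
    have hTup : ∀ i j : Fin (n+1), (j : ℕ) < (i : ℕ) → T i j = 0 := by
      intro i j hij
      rw [hT, Matrix.diagonal_mul, hu.2 i j (Fin.lt_def.2 hij), mul_zero]
    have hTdiag : ∀ i : Fin (n+1), T i i = d i := by
      intro i
      rw [hT, Matrix.diagonal_mul, hu.1 i, mul_one]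
    have e : antiDiag n * (g * Matrix.diagonal d * u) = (antiDiag n * g) * T := by
      rw [hT, Matrix.mul_assoc g, ← Matrix.mul_assoc]
    rw [e]
    unfold Phi
    rw [upper_mul_submatrix hk _ _ hTup, Matrix.det_mul, det_sub_upper hk _ hTup,
      prod_filter_lt hk d]
    have hp : ∏ i : Fin k, T (Fin.castLE hk i) (Fin.castLE hk i) =
        ∏ i : Fin k, d (Fin.castLE hk i) := Finset.prod_congr rfl fun i _ => hTdiag _
    rw [hp]
    ring
  · intro g d' u' hu' _ _
    set T := Matrix.diagonal d' * u' with hT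
    have hTup : ∀ i j : Fin (n+1), (j : ℕ) < (i : ℕ) → T i j = 0 := by
      intro i j hij
      rw [hT, Matrix.diagonal_mul, hu'.2 i j (Fin.lt_def.2 hij), mul_zero]
    have hTdiag : ∀ i : Fin (n+1), T i i = d' i := by
      intro i
      rw [hT, Matrix.diagonal_mul, hu'.1 i, mul_one]
    set L := antiDiag n * T * antiDiag n with hLdef
    have hLlow : ∀ i j : Fin (n+1), (i : ℕ) < (j : ℕ) → L i j = 0 := by
      intro i j hij
      rw [hLdef, conj_apply]
      apply hTup
      rw [val_rev, val_rev]
      have := j.is_le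
      omega
    have hLdiag : ∀ i : Fin (n+1), L i i = d' i.rev := by
      intro i
      rw [hLdef, conj_apply, hTdiag]
    have e : L * (antiDiag n * g) = antiDiag n * (T * g) := by
      calc L * (antiDiag n * g)
          = antiDiag n * T * (antiDiag n * (antiDiag n * g)) :=
            Matrix.mul_assoc (antiDiag n * T) (antiDiag n) (antiDiag n * g)
        _ = antiDiag n * T * (antiDiag n * antiDiag n * g) := by
            rw [← Matrix.mul_assoc (antiDiag n) (antiDiag n) g]
        _ = antiDiag n * (T * g) := by
            rw [antiDiag_sq, Matrix.one_mul, Matrix.mul_assoc]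
    rw [← e]
    unfold Phi
    rw [lower_mul_submatrix hk _ _ hLlow, Matrix.det_mul, det_sub_lower hk _ hLlow,
      prod_filter_ge hk1 hk d']
    have hp : ∏ i : Fin k, L (Fin.castLE hk i) (Fin.castLE hk i) =
        ∏ i : Fin k, d' (Fin.castLE hk i).rev := Finset.prod_congr rfl fun i _ => hLdiag _
    rw [hp]
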